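/- Let ℓ ≠ 2, 7 be a prime, V = 𝔽_ℓ⁷, and H ≤ GL(V) a subgroup containing g_∞ (diagonalizable with eigenvalues ζ₇,...,ζ₇⁶,1 over 𝔽̄_ℓ), an element h_{∞,p} with h⁻¹g_∞h = g_∞^p for p a primitive root mod 7, and a unipotent element g₁ whose Jordan canonical form has no block of length 1 (type (2,2,3)). Then V is an indecomposable 𝔽_ℓ[H]-module. -/
import Mathlib


open Matrix

open LinearMap Submodule FiniteDimensional Module

lemma rank_restrict_aux {F V : Type*} [Field F] [AddCommGroup V] [Module F V]
    [FiniteDimensional F V] (f : V →ₗ[F] V) :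
    finrank F (LinearMap.range f) =
      finrank F (LinearMap.range (f ∘ₗ f)) + finrank F (LinearMap.ker f ⊓ LinearMap.range f : Submodule F V) := by
  have h := LinearMap.finrank_range_add_finrank_ker (f.domRestrict (LinearMap.range f))
  rw [LinearMap.range_domRestrict] at h
  have hker : LinearMap.ker (f.domRestrict (LinearMap.range f))
      = Submodule.comap (LinearMap.range f).subtype (LinearMap.ker f) := by
    ext x; simp [LinearMap.mem_ker]
  have hinj : Function.Injective (LinearMap.range f).subtype := Submodule.injective_subtype _
  have h2 : finrank F (LinearMap.ker (f.domRestrict (LinearMap.range f)))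
      = finrank F (LinearMap.ker f ⊓ LinearMap.range f : Submodule F V) := by
    rw [hker]
    calc finrank F (Submodule.comap (LinearMap.range f).subtype (LinearMap.ker f))
        = finrank F (Submodule.map (LinearMap.range f).subtype
            (Submodule.comap (LinearMap.range f).subtype (LinearMap.ker f))) :=
          LinearEquiv.finrank_eq (Submodule.equivMapOfInjective _ hinj _)
      _ = finrank F (LinearMap.ker f ⊓ LinearMap.range f : Submodule F V) := by
          rw [Submodule.map_comap_subtype, inf_comm]
  have h3 : Submodule.map f (LinearMap.range f) = LinearMap.range (f ∘ₗ f) := by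
    rw [LinearMap.range_comp]
  rw [h3, h2] at h
  omega

lemma ker_le_range_aux {F V : Type*} [Field F] [AddCommGroup V] [Module F V]
    [FiniteDimensional F V] (f : V →ₗ[F] V)
    (hV : finrank F V = 7)
    (h1 : finrank F (LinearMap.range f) = 4)
    (h2 : finrank F (LinearMap.range (f ∘ₗ f)) = 1) :
    LinearMap.ker f ≤ LinearMap.range f := by
  have hrn := LinearMap.finrank_range_add_finrank_ker f
  rw [hV, h1] at hrn
  have h := rank_restrict_aux f
  rw [h1, h2] at h
  have heq : LinearMap.ker f ⊓ LinearMap.range f = LinearMap.ker f :=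
    Submodule.eq_of_le_of_finrank_le inf_le_left (by omega)
  exact heq.ge.trans inf_le_right

open Matrix Module


lemma card_nonzero_zmod7 : (Finset.univ.filter (fun x : ZMod 7 => x ≠ 0)).card = 6 := by decide

lemma orbit_aux (p : ℕ) (hp : ∀ k : ℕ, 0 < k → k < 6 → p ^ k % 7 ≠ 1) (hp7 : p % 7 ≠ 0)
    (a b : ZMod 7) (ha : a ≠ 0) (hb : b ≠ 0) : ∃ m : ℕ, b = (p : ZMod 7) ^ m * a := by
  haveI : Fact (Nat.Prime 7) := ⟨by norm_num⟩
  set q : ZMod 7 := ((p : ℕ) : ZMod 7) with hq_def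
  have hq : q ≠ 0 := by
    intro hcontr
    rw [hq_def, ZMod.natCast_eq_zero_iff] at hcontr
    obtain ⟨c, rfl⟩ := hcontr
    simp [Nat.mul_mod_right] at hp7
  have hqpow : ∀ k : ℕ, 0 < k → k < 6 → q ^ k ≠ 1 := by
    intro k hk0 hk6 hcontr
    have h1 : ((p ^ k : ℕ) : ZMod 7) = ((1 : ℕ) : ZMod 7) := by push_cast; simpa using hcontr
    rw [ZMod.natCast_eq_natCast_iff] at h1
    have h2 : p ^ k % 7 = 1 % 7 := h1
    exact hp k hk0 hk6 (by simpa using h2)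
  -- injectivity of m ↦ q^m * a on Fin 6
  have hinj : Function.Injective (fun m : Fin 6 => q ^ (m : ℕ) * a) := by
    intro m1 m2 hEq
    simp only at hEq
    have hEq' : q ^ (m1 : ℕ) = q ^ (m2 : ℕ) := mul_right_cancel₀ ha hEq
    rcases le_total (m1 : ℕ) (m2 : ℕ) with hle | hle
    · have hpow : q ^ ((m2 : ℕ) - (m1 : ℕ)) * q ^ (m1 : ℕ) = q ^ (m2:ℕ) := by
        rw [← pow_add]; congr 1; omega
      rw [← hEq'] at hpow
      have h1 : q ^ ((m2 : ℕ) - (m1 : ℕ)) = 1 :=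
        mul_right_cancel₀ (pow_ne_zero _ hq) (by rw [hpow, one_mul])
      have : (m2 : ℕ) - (m1 : ℕ) = 0 := by
        by_contra hne
        exact hqpow _ (Nat.pos_of_ne_zero hne) (by omega) h1
      exact Fin.ext (by omega)
    · have hpow : q ^ ((m1 : ℕ) - (m2 : ℕ)) * q ^ (m2 : ℕ) = q ^ (m1:ℕ) := by
        rw [← pow_add]; congr 1; omega
      rw [hEq'] at hpow
      have h1 : q ^ ((m1 : ℕ) - (m2 : ℕ)) = 1 :=
        mul_right_cancel₀ (pow_ne_zero _ hq) (by rw [hpow, one_mul])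
      have : (m1 : ℕ) - (m2 : ℕ) = 0 := by
        by_contra hne
        exact hqpow _ (Nat.pos_of_ne_zero hne) (by omega) h1
      exact Fin.ext (by omega)
  -- image = all nonzero elements
  have hcard_s : (Finset.univ.filter (fun x : ZMod 7 => x ≠ 0)).card = 6 := card_nonzero_zmod7
  have himg_sub : (Finset.univ.image (fun m : Fin 6 => q ^ (m : ℕ) * a)) ⊆ Finset.univ.filter (fun x : ZMod 7 => x ≠ 0) := by
    intro x hx
    simp only [Finset.mem_image] at hx
    obtain ⟨m, _, rfl⟩ := hx
    simp only [Finset.mem_filter, Finset.mem_univ, true_and]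
    exact mul_ne_zero (pow_ne_zero _ hq) ha
  have hcard_img : (Finset.univ.image (fun m : Fin 6 => q ^ (m : ℕ) * a)).card = 6 := by
    rw [Finset.card_image_of_injective _ hinj, Finset.card_univ, Fintype.card_fin]
  have himg_eq : (Finset.univ.image (fun m : Fin 6 => q ^ (m : ℕ) * a)) = Finset.univ.filter (fun x : ZMod 7 => x ≠ 0) :=
    Finset.eq_of_subset_of_card_le himg_sub (by omega)
  have hb_mem : b ∈ Finset.univ.filter (fun x : ZMod 7 => x ≠ 0) := by simp [hb]
  rw [← himg_eq] at hb_mem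
  simp only [Finset.mem_image] at hb_mem
  obtain ⟨m, _, hm⟩ := hb_mem
  exact ⟨(m : ℕ), hm.symm⟩

section Eigen

variable {K : Type*} [Field K]

lemma eigen_classify (ζ : K) (hζ : IsPrimitiveRoot ζ 7) (p : ℕ)
    (hp : ∀ k : ℕ, 0 < k → k < 6 → p ^ k % 7 ≠ 1) (hp7 : p % 7 ≠ 0)
    (G Hm : Matrix (Fin 7) (Fin 7) K) (P : GL (Fin 7) K)
    (hG : G = (P : Matrix (Fin 7) (Fin 7) K) *
        Matrix.diagonal (fun i : Fin 7 => ζ ^ ((i : ℕ) + 1)) *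
        ((P⁻¹ : GL (Fin 7) K) : Matrix (Fin 7) (Fin 7) K))
    (hHm : IsUnit Hm)
    (hrel : G * Hm = Hm * G ^ p)
    (S : Submodule K (Fin 7 → K))
    (hSG : ∀ v ∈ S, G.mulVec v ∈ S)
    (hSH : ∀ v ∈ S, Hm.mulVec v ∈ S) :
    finrank K S ≤ 1 ∨ 6 ≤ finrank K S := by
  classical
  -- eigenvalues
  set μ : Fin 7 → K := fun i => ζ ^ ((i : ℕ) + 1) with hμ_def
  have hord : orderOf ζ = 7 := (hζ.eq_orderOf).symm
  have hmod : ∀ a b : ℕ, a % 7 = b % 7 → ζ ^ a = ζ ^ b := by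
    have key : ∀ a : ℕ, ζ ^ a = ζ ^ (a % 7) := by
      intro a
      conv_lhs => rw [← Nat.div_add_mod a 7]
      rw [pow_add, pow_mul, hζ.pow_eq_one, one_pow, one_mul]
    intro a b hab
    rw [key a, key b, hab]
  set ε : ZMod 7 → K := fun c => ζ ^ (c.val) with hε_def
  have hεinj : Function.Injective ε := by
    intro c d hcd
    have := hζ.pow_inj (ZMod.val_lt c) (ZMod.val_lt d) hcd
    exact ZMod.val_injective _ this
  set ι : Fin 7 → ZMod 7 := fun i => (((i : ℕ) + 1 : ℕ) : ZMod 7) with hι_def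
  have hμε : ∀ i, μ i = ε (ι i) := by
    intro i
    simp only [hμ_def, hε_def, hι_def]
    apply hmod
    rw [ZMod.val_natCast]
    omega
  have hιinj : Function.Injective ι := by
    intro i j hij
    simp only [hι_def] at hij
    rw [ZMod.natCast_eq_natCast_iff] at hij
    have h1 : ((i : ℕ) + 1) % 7 = ((j : ℕ) + 1) % 7 := hij
    have hi := i.isLt
    have hj := j.isLt
    exact Fin.ext (by omega)
  have hμinj : Function.Injective μ := by
    intro i j hij
    exact hιinj (hεinj (by rw [← hμε, ← hμε, hij]))
  set ιinv : ZMod 7 → Fin 7 := fun d => ⟨(d.val + 6) % 7, Nat.mod_lt _ (by norm_num)⟩ with hιinv_def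
  have hιιinv : ∀ d : ZMod 7, ι (ιinv d) = d := by decide
  have hιinvι : ∀ i : Fin 7, ιinv (ι i) = i := fun i => hιinj (hιιinv (ι i))
  -- the eigenbasis
  set e : (Fin 7 → K) ≃ₗ[K] (Fin 7 → K) :=
    LinearMap.GeneralLinearGroup.toLinearEquiv (Matrix.GeneralLinearGroup.toLin P) with he_def
  set b : Basis (Fin 7) K (Fin 7 → K) := (Pi.basisFun K (Fin 7)).map e with hb_def
  have hb_apply : ∀ i, b i = (P : Matrix (Fin 7) (Fin 7) K).mulVec (Pi.single i 1) := by
    intro i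
    simp [hb_def, he_def, Basis.map_apply]

  have hPinvP : ((P⁻¹ : GL (Fin 7) K) : Matrix (Fin 7) (Fin 7) K) *
      (P : Matrix (Fin 7) (Fin 7) K) = 1 := by
    rw [← Matrix.GeneralLinearGroup.coe_mul, inv_mul_cancel]
    rfl
  have hGb : ∀ i, G.mulVec (b i) = μ i • b i := by
    intro i
    rw [hb_apply, Matrix.mulVec_mulVec, hG]
    have hsimp : ((P : Matrix (Fin 7) (Fin 7) K) * diagonal μ *
        ((P⁻¹ : GL (Fin 7) K) : Matrix (Fin 7) (Fin 7) K) * (P : Matrix (Fin 7) (Fin 7) K))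
        = (P : Matrix (Fin 7) (Fin 7) K) * diagonal μ := by
      rw [Matrix.mul_assoc, hPinvP, Matrix.mul_one]
    rw [hsimp, ← Matrix.mulVec_mulVec, Matrix.diagonal_mulVec_single, mul_one,
      ← Matrix.mulVec_smul, ← Pi.single_smul, smul_eq_mul, mul_one]
  -- coordinates of eigenvectors
  have hcoordG : ∀ (j : Fin 7), (b.coord j) ∘ₗ G.mulVecLin = μ j • b.coord j := by
    intro j
    apply b.ext
    intro k
    simp only [LinearMap.comp_apply, Matrix.mulVecLin_apply, hGb, LinearMap.smul_apply,
      _root_.map_smul, Basis.coord_apply, Basis.repr_self]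
    by_cases hk : k = j
    · subst hk; simp
    · simp [Finsupp.single_apply, hk, Ne.symm hk]
  have hcoord : ∀ (x : Fin 7 → K) (a : K), G.mulVec x = a • x →
      ∀ j, μ j ≠ a → b.repr x j = 0 := by
    intro x a hx j hj
    have h1 : (b.coord j) (G.mulVecLin x) = μ j * b.repr x j := by
      have := congrFun (congrArg (fun f => f.toFun) (hcoordG j)) x
      simpa using this
    have h2 : (b.coord j) (G.mulVecLin x) = a * b.repr x j := by
      rw [Matrix.mulVecLin_apply, hx]
      simp [Basis.coord_apply]
    have h3 : (μ j - a) * b.repr x j = 0 := by rw [sub_mul, h1.symm.trans h2]; ring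
    rcases mul_eq_zero.mp h3 with h | h
    · exact absurd (by linear_combination h) hj
    · exact h
  -- eigenvector lies in span of the corresponding basis vector
  have hspan : ∀ (x : Fin 7 → K) (d : ZMod 7), G.mulVec x = ε d • x →
      x = b.repr x (ιinv d) • b (ιinv d) := by
    intro x d hx
    have hsum := b.sum_repr x
    have hsingle : ∑ j : Fin 7, b.repr x j • b j = b.repr x (ιinv d) • b (ιinv d) := by
      apply Finset.sum_eq_single (ιinv d)
      · intro j _ hj
        have hμj : μ j ≠ ε d := by
          rw [hμε]
          intro hcontr
          exact hj (by rw [← hιinvι j, hεinj hcontr])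
        rw [hcoord x (ε d) hx j hμj, zero_smul]
      · intro hcontr
        exact absurd (Finset.mem_univ _) hcontr
    calc x = ∑ j : Fin 7, b.repr x j • b j := hsum.symm
      _ = b.repr x (ιinv d) • b (ιinv d) := hsingle
  -- powers of G on eigenvectors
  have hGpowb : ∀ (n : ℕ) (i : Fin 7), (G ^ n).mulVec (b i) = (μ i) ^ n • b i := by
    intro n i
    induction n with
    | zero => simp
    | succ n ih =>
      rw [pow_succ', ← Matrix.mulVec_mulVec, ih, Matrix.mulVec_smul, hGb,
        smul_smul, pow_succ', mul_comm]
  have hGlpow : ∀ n : ℕ, (G ^ n).mulVecLin = (G.mulVecLin) ^ n := by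
    intro n
    induction n with
    | zero => rw [pow_zero, pow_zero, Matrix.mulVecLin_one, Module.End.one_eq_id]
    | succ n ih =>
      rw [pow_succ, pow_succ, ← ih, Matrix.mulVecLin_mul]
      rfl
  -- polynomials in G preserve S
  have hpolyS : ∀ (r : Polynomial K), ∀ v ∈ S, (Polynomial.aeval G.mulVecLin r) v ∈ S := by
    have hpowS : ∀ (n : ℕ) (v : Fin 7 → K), v ∈ S → ((G.mulVecLin) ^ n) v ∈ S := by
      intro n
      induction n with
      | zero => intro v hv; simpa using hv
      | succ n ih =>
        intro v hv
        rw [pow_succ, Module.End.mul_apply]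
        exact ih _ (by simpa using hSG v hv)
    intro r
    induction r using Polynomial.induction_on' with
    | add r s hr hs =>
      intro v hv
      rw [map_add, LinearMap.add_apply]
      exact Submodule.add_mem _ (hr v hv) (hs v hv)
    | monomial n a =>
      intro v hv
      rw [Polynomial.aeval_monomial, Module.End.mul_apply, Module.algebraMap_end_apply]
      exact Submodule.smul_mem _ _ (hpowS n v hv)
  -- polynomials in G act on eigenvectors by evaluation
  have hpolyb : ∀ (r : Polynomial K) (m : Fin 7),
      (Polynomial.aeval G.mulVecLin r) (b m) = (r.eval (μ m)) • b m := by
    intro r m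
    induction r using Polynomial.induction_on' with
    | add r s hr hs => rw [map_add, LinearMap.add_apply, hr, hs, Polynomial.eval_add, add_smul]
    | monomial n a =>
      rw [Polynomial.aeval_monomial, Module.End.mul_apply, Module.algebraMap_end_apply,
        ← hGlpow, Matrix.mulVecLin_apply, hGpowb, Polynomial.eval_monomial, smul_smul]
  -- projector: if a coordinate is nonzero, the basis vector is in S
  have hproj : ∀ x ∈ S, ∀ j : Fin 7, b.repr x j ≠ 0 → b j ∈ S := by
    intro x hx j hrepr
    set q : Polynomial K :=
      ∏ k ∈ Finset.univ.erase j, (Polynomial.X - Polynomial.C (μ k)) with hq_def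
    have hqeval : ∀ m : Fin 7, q.eval (μ m) = ∏ k ∈ Finset.univ.erase j, (μ m - μ k) := by
      intro m
      rw [hq_def, Polynomial.eval_prod]
      exact Finset.prod_congr rfl (fun k _ => by simp)
    have hQx : (Polynomial.aeval G.mulVecLin q) x
        = (b.repr x j * ∏ k ∈ Finset.univ.erase j, (μ j - μ k)) • b j := by
      have hsum := b.sum_repr x
      conv_lhs => rw [← hsum]
      rw [map_sum]
      have hterm : ∀ m : Fin 7, (Polynomial.aeval G.mulVecLin q) (b.repr x m • b m)
          = b.repr x m • (∏ k ∈ Finset.univ.erase j, (μ m - μ k)) • b m := by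
        intro m
        rw [_root_.map_smul, hpolyb, hqeval]
      rw [Finset.sum_congr rfl (fun m _ => hterm m)]
      rw [Finset.sum_eq_single j]
      · rw [smul_smul]
      · intro m _ hm
        have : (∏ k ∈ Finset.univ.erase j, (μ m - μ k)) = 0 :=
          Finset.prod_eq_zero (Finset.mem_erase.mpr ⟨hm, Finset.mem_univ m⟩) (by ring)
        rw [this, zero_smul, smul_zero]
      · intro hcontr
        exact absurd (Finset.mem_univ _) hcontr
    have hC : (∏ k ∈ Finset.univ.erase j, (μ j - μ k)) ≠ 0 := by
      apply Finset.prod_ne_zero_iff.mpr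
      intro k hk
      have hkj : k ≠ j := (Finset.mem_erase.mp hk).1
      exact sub_ne_zero_of_ne (fun hEq => hkj (hμinj hEq).symm)
    have hcoeff : b.repr x j * ∏ k ∈ Finset.univ.erase j, (μ j - μ k) ≠ 0 :=
      mul_ne_zero hrepr hC
    have hbj : b j = (b.repr x j * ∏ k ∈ Finset.univ.erase j, (μ j - μ k))⁻¹ •
        (Polynomial.aeval G.mulVecLin q) x := by
      rw [hQx, smul_smul, inv_mul_cancel₀ hcoeff, one_smul]
    rw [hbj]
    exact Submodule.smul_mem _ _ (hpolyS q x hx)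
  -- the support of S in the eigenbasis
  classical
  set T : Finset (Fin 7) := Finset.univ.filter (fun j => b j ∈ S) with hT_def
  have hTS : ∀ j ∈ T, b j ∈ S := fun j hj => (Finset.mem_filter.mp hj).2
  have hSspan : S = Submodule.span K (b '' (T : Set (Fin 7))) := by
    apply le_antisymm
    · intro x hx
      have hsum := b.sum_repr x
      rw [← hsum]
      apply Submodule.sum_mem
      intro m _
      by_cases hm : b.repr x m = 0
      · rw [hm, zero_smul]; exact Submodule.zero_mem _
      · have hbm : b m ∈ S := hproj x hx m hm
        have hmT : m ∈ T := Finset.mem_filter.mpr ⟨Finset.mem_univ m, hbm⟩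
        exact Submodule.smul_mem _ _ (Submodule.subset_span ⟨m, by simpa using hmT, rfl⟩)
    · rw [Submodule.span_le]
      rintro y ⟨m, hm, rfl⟩
      exact hTS m (by simpa using hm)
  have hfinrank : finrank K S = T.card := by
    rw [hSspan]
    have hli : LinearIndependent K (fun j : {x // x ∈ T} => b j) :=
      b.linearIndependent.comp _ Subtype.val_injective
    have himg : Set.range (fun j : {x // x ∈ T} => b (j : Fin 7)) = b '' (T : Set (Fin 7)) := by
      ext y
      constructor
      · rintro ⟨⟨m, hm⟩, rfl⟩; exact ⟨m, hm, rfl⟩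
      · rintro ⟨m, hm, rfl⟩; exact ⟨⟨m, hm⟩, rfl⟩
    rw [← himg, finrank_span_eq_card hli, Fintype.card_coe]
  -- closure of T under the action of h
  have hstep : ∀ c : ZMod 7, b (ιinv c) ∈ S → b (ιinv (((p : ℕ) : ZMod 7) * c)) ∈ S := by
    intro c hc
    set x := Hm.mulVec (b (ιinv c)) with hx_def
    have hxS : x ∈ S := hSH _ hc
    have hεpow : (ε c) ^ p = ε (((p : ℕ) : ZMod 7) * c) := by
      simp only [hε_def]
      rw [← pow_mul]
      apply hmod
      have hcast : (((c.val * p : ℕ)) : ZMod 7)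
          = ((((((p : ℕ) : ZMod 7) * c).val : ℕ)) : ZMod 7) := by
        push_cast
        rw [ZMod.natCast_val, ZMod.cast_id, ZMod.natCast_val, ZMod.cast_id]
        ring
      rw [ZMod.natCast_eq_natCast_iff] at hcast
      exact hcast
    have hxeig : G.mulVec x = ε (((p : ℕ) : ZMod 7) * c) • x := by
      rw [hx_def, Matrix.mulVec_mulVec, hrel, ← Matrix.mulVec_mulVec]
      rw [hGpowb, hμε, hιιinv, hεpow, Matrix.mulVec_smul]
    have hx0 : x ≠ 0 := by
      intro hcontr
      obtain ⟨u, hu⟩ := hHm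
      have hb0 : b (ιinv c) = 0 := by
        have h1 : ((u⁻¹ : _) : Matrix (Fin 7) (Fin 7) K).mulVec (Hm.mulVec (b (ιinv c)))
            = b (ιinv c) := by
          rw [Matrix.mulVec_mulVec, ← hu, ← Units.val_mul, inv_mul_cancel,
            Units.val_one, Matrix.one_mulVec]
        rw [← h1, ← hx_def, hcontr, Matrix.mulVec_zero]
      exact b.ne_zero _ hb0
    have hxspan := hspan x _ hxeig
    set r := b.repr x (ιinv (((p : ℕ) : ZMod 7) * c)) with hr_def
    have hr : r ≠ 0 := by
      intro hcontr
      rw [hcontr, zero_smul] at hxspan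
      exact hx0 hxspan
    have hbk : b (ιinv (((p : ℕ) : ZMod 7) * c)) = r⁻¹ • x := by
      calc b (ιinv (((p : ℕ) : ZMod 7) * c))
          = r⁻¹ • (r • b (ιinv (((p : ℕ) : ZMod 7) * c))) := by
            rw [smul_smul, inv_mul_cancel₀ hr, one_smul]
        _ = r⁻¹ • x := by rw [← hxspan]
    rw [hbk]
    exact Submodule.smul_mem _ _ hxS
  have hiter : ∀ (m : ℕ) (c : ZMod 7), b (ιinv c) ∈ S →
      b (ιinv (((p : ℕ) : ZMod 7) ^ m * c)) ∈ S := by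
    intro m
    induction m with
    | zero => intro c hc; simpa using hc
    | succ m ih =>
      intro c hc
      have hthis := hstep _ (ih c hc)
      rwa [show ((p : ℕ) : ZMod 7) * (((p : ℕ) : ZMod 7) ^ m * c)
        = ((p : ℕ) : ZMod 7) ^ (m + 1) * c by ring] at hthis
  by_cases hEx : ∃ j ∈ T, ι j ≠ 0
  · right
    obtain ⟨j, hjT, hj0⟩ := hEx
    have hsub : Finset.univ.filter
        (fun j' : Fin 7 => ((((j' : ℕ) + 1 : ℕ)) : ZMod 7) ≠ 0) ⊆ T := by
      intro j' hj'
      have hj'0 : ι j' ≠ 0 := by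
        have := (Finset.mem_filter.mp hj').2
        rw [hι_def]
        exact this
      obtain ⟨m, hm⟩ := orbit_aux p hp hp7 (ι j) (ι j') hj0 hj'0
      have hbj : b (ιinv (ι j)) ∈ S := by rw [hιinvι]; exact hTS j hjT
      have hthis := hiter m (ι j) hbj
      rw [← hm, hιinvι] at hthis
      exact Finset.mem_filter.mpr ⟨Finset.mem_univ _, hthis⟩
    have hcard6 : (Finset.univ.filter
        (fun j' : Fin 7 => ((((j' : ℕ) + 1 : ℕ)) : ZMod 7) ≠ 0)).card = 6 := by decide
    rw [hfinrank]
    calc (6 : ℕ) = _ := hcard6.symm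
      _ ≤ T.card := Finset.card_le_card hsub
  · left
    push_neg at hEx
    have hsub : T ⊆ {ιinv 0} := by
      intro j hj
      have hj0 : ι j = 0 := hEx j hj
      have : j = ιinv 0 := by rw [← hj0, hιinvι]
      exact Finset.mem_singleton.mpr this
    rw [hfinrank]
    calc T.card ≤ ({ιinv 0} : Finset (Fin 7)).card := Finset.card_le_card hsub
      _ = 1 := Finset.card_singleton _

end Eigen


section Dim1


variable {F : Type*} [Field F]

lemma dim1_contra (N : Matrix (Fin 7) (Fin 7) F) (hN3 : N ^ 3 = 0)
    (hker : LinearMap.ker N.mulVecLin ≤ LinearMap.range N.mulVecLin)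
    (U W : Submodule F (Fin 7 → F)) (hU0 : U ≠ ⊥)
    (hUW : U ⊓ W = ⊥) (hUWtop : U ⊔ W = ⊤)
    (hUN : ∀ v ∈ U, N.mulVec v ∈ U) (hWN : ∀ v ∈ W, N.mulVec v ∈ W)
    (hUdim : finrank F U = 1) : False := by
  obtain ⟨u₀, hu₀U, hu₀0⟩ := Submodule.exists_mem_ne_zero_of_ne_bot hU0
  have hspan : Submodule.span F {u₀} = U := by
    apply Submodule.eq_of_le_of_finrank_le
    · rw [Submodule.span_le, Set.singleton_subset_iff]; exact hu₀U
    · rw [hUdim, finrank_span_singleton hu₀0]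
  -- N kills u₀
  obtain ⟨c, hc⟩ := Submodule.mem_span_singleton.mp (hspan ▸ hUN u₀ hu₀U)
  have hc3 : N.mulVec (N.mulVec (N.mulVec u₀)) = (c * c * c) • u₀ := by
    calc N.mulVec (N.mulVec (N.mulVec u₀)) = N.mulVec (N.mulVec (c • u₀)) := by rw [hc]
      _ = N.mulVec (c • N.mulVec u₀) := by rw [Matrix.mulVec_smul]
      _ = N.mulVec (c • (c • u₀)) := by rw [hc]
      _ = c • (c • N.mulVec u₀) := by rw [Matrix.mulVec_smul, Matrix.mulVec_smul]
      _ = c • (c • (c • u₀)) := by rw [hc]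
      _ = (c * c * c) • u₀ := by rw [smul_smul, smul_smul, mul_assoc]
  have hN3u : N.mulVec (N.mulVec (N.mulVec u₀)) = 0 := by
    rw [Matrix.mulVec_mulVec, Matrix.mulVec_mulVec,
      show N * N * N = N ^ 3 by rw [pow_succ, pow_succ, pow_one], hN3, Matrix.zero_mulVec]
  have hc0 : c = 0 := by
    rw [hN3u] at hc3
    have := (smul_eq_zero.mp hc3.symm).resolve_right hu₀0
    have h3 : c ^ 3 = 0 := by rw [pow_succ, pow_two]; linear_combination this
    exact pow_eq_zero_iff (by norm_num) |>.mp h3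
  have hNu₀ : N.mulVec u₀ = 0 := by rw [← hc, hc0, zero_smul]
  -- U is contained in the kernel
  have hUker : U ≤ LinearMap.ker N.mulVecLin := by
    rw [← hspan, Submodule.span_le, Set.singleton_subset_iff]
    simpa [LinearMap.mem_ker] using hNu₀
  -- range is contained in W
  have hrangeW : LinearMap.range N.mulVecLin ≤ W := by
    rintro y ⟨x, rfl⟩
    have hxtop : x ∈ U ⊔ W := by rw [hUWtop]; trivial
    obtain ⟨u, hu, w, hw, rfl⟩ := Submodule.mem_sup.mp hxtop
    have hNu : N.mulVec u = 0 := hUker hu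
    have : N.mulVecLin (u + w) = N.mulVec w := by
      simp [Matrix.mulVec_add, hNu]
    rw [this]
    exact hWN w hw
  have : u₀ ∈ U ⊓ W := ⟨hu₀U, hrangeW (hker (hUker hu₀U))⟩
  rw [hUW] at this
  exact hu₀0 this

end Dim1


/-- Let `ℓ ≠ 2,7`, `V = 𝔽_ℓ⁷`, and `H ≤ GL(V)` containing `g_∞`
(diagonalizable over `𝔽̄_ℓ` with eigenvalues `ζ₇, ..., ζ₇⁶, 1`), an element
`h` with `h⁻¹ g_∞ h = g_∞^p` for `p` a primitive root mod `7`, and a unipotent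
`g₁` of Jordan type `(2,2,3)` (no block of length 1). Then `V` is an
indecomposable `𝔽_ℓ[H]`-module. -/
theorem V_indecomposable
    (ℓ p : ℕ) [Fact ℓ.Prime] [Fact p.Prime] (h2 : ℓ ≠ 2) (h7 : ℓ ≠ 7)
    (hp : ∀ k : ℕ, 0 < k → k < 6 → p ^ k % 7 ≠ 1) (hp7 : p % 7 ≠ 0)
    (K : Type*) [Field K] [IsAlgClosed K] [CharP K ℓ] [Algebra (ZMod ℓ) K]
    (ζ : K) (hζ : IsPrimitiveRoot ζ 7)
    (H : Subgroup (GL (Fin 7) (ZMod ℓ)))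
    (gInf h g₁ : GL (Fin 7) (ZMod ℓ))
    (hgInfH : gInf ∈ H) (hhH : h ∈ H) (hg₁H : g₁ ∈ H)
    (hdiag : ∃ P : GL (Fin 7) K,
      ((gInf : Matrix (Fin 7) (Fin 7) (ZMod ℓ)).map (algebraMap (ZMod ℓ) K))
        = (P : Matrix (Fin 7) (Fin 7) K) *
            Matrix.diagonal (fun i : Fin 7 => ζ ^ ((i : ℕ) + 1)) *
            ((P⁻¹ : GL (Fin 7) K) : Matrix (Fin 7) (Fin 7) K))
    (hconj : h⁻¹ * gInf * h = gInf ^ p)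
    (hu : ((g₁ : Matrix (Fin 7) (Fin 7) (ZMod ℓ)) - 1) ^ 3 = 0)
    (hrk1 : ((g₁ : Matrix (Fin 7) (Fin 7) (ZMod ℓ)) - 1).rank = 4)
    (hrk2 : (((g₁ : Matrix (Fin 7) (Fin 7) (ZMod ℓ)) - 1) ^ 2).rank = 1) :
    ¬ ∃ U W : Submodule (ZMod ℓ) (Fin 7 → ZMod ℓ),
      U ≠ ⊥ ∧ W ≠ ⊥ ∧ U ⊓ W = ⊥ ∧ U ⊔ W = ⊤ ∧
      (∀ g ∈ H, ∀ v ∈ U, (g : Matrix (Fin 7) (Fin 7) (ZMod ℓ)).mulVec v ∈ U) ∧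
      (∀ g ∈ H, ∀ v ∈ W, (g : Matrix (Fin 7) (Fin 7) (ZMod ℓ)).mulVec v ∈ W) := by
  classical
  rintro ⟨U, W, hU0, hW0, hUW, hUWtop, hUH, hWH⟩
  obtain ⟨P, hdiagP⟩ := hdiag
  set φ : ZMod ℓ →+* K := algebraMap (ZMod ℓ) K with hφ_def
  set fmap : (Fin 7 → ZMod ℓ) → (Fin 7 → K) := fun v => φ ∘ v with hfmap_def
  have hfadd : ∀ v w, fmap (v + w) = fmap v + fmap w := by
    intro v w; funext i; simp [hfmap_def]
  have hfsmul : ∀ (c : ZMod ℓ) v, fmap (c • v) = φ c • fmap v := by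
    intro c v; funext i; simp [hfmap_def]
  have hfzero : fmap 0 = 0 := by funext i; simp [hfmap_def]
  have hf0 : ∀ v, fmap v = 0 → v = 0 := by
    intro v hv
    funext i
    have := congrFun hv i
    simp only [hfmap_def, Function.comp_apply, Pi.zero_apply] at this
    exact φ.injective (by simpa using this)
  have hfmulVec : ∀ (A : Matrix (Fin 7) (Fin 7) (ZMod ℓ)) v,
      (A.map φ).mulVec (fmap v) = fmap (A.mulVec v) := by
    intro A v
    funext i
    exact (RingHom.map_mulVec φ A v i).symm
  -- invariance of the base-changed submodule
  have hinv : ∀ (X : Submodule (ZMod ℓ) (Fin 7 → ZMod ℓ)) (A : Matrix (Fin 7) (Fin 7) (ZMod ℓ)),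
      (∀ v ∈ X, A.mulVec v ∈ X) →
      ∀ x ∈ Submodule.span K (fmap '' (X : Set (Fin 7 → ZMod ℓ))),
        (A.map φ).mulVec x ∈ Submodule.span K (fmap '' (X : Set (Fin 7 → ZMod ℓ))) := by
    intro X A hA x hx
    induction hx using Submodule.span_induction with
    | mem y hy =>
      obtain ⟨v, hv, rfl⟩ := hy
      rw [hfmulVec]
      exact Submodule.subset_span ⟨_, hA v hv, rfl⟩
    | zero => rw [Matrix.mulVec_zero]; exact Submodule.zero_mem _
    | add y z _ _ hy hz => rw [Matrix.mulVec_add]; exact Submodule.add_mem _ hy hz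
    | smul c y _ hy => rw [Matrix.mulVec_smul]; exact Submodule.smul_mem _ _ hy
  -- dimension bound for the base-changed submodule
  have hdim_le : ∀ (X : Submodule (ZMod ℓ) (Fin 7 → ZMod ℓ)),
      finrank K (Submodule.span K (fmap '' (X : Set (Fin 7 → ZMod ℓ))))
        ≤ finrank (ZMod ℓ) X := by
    intro X
    set n := finrank (ZMod ℓ) X with hn_def
    let bX := Module.finBasis (ZMod ℓ) X
    let vX : Fin n → (Fin 7 → ZMod ℓ) := fun i => (bX i : Fin 7 → ZMod ℓ)
    have hXspan : (X : Set (Fin 7 → ZMod ℓ)) ⊆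
        (Submodule.span (ZMod ℓ) (Set.range vX) : Set (Fin 7 → ZMod ℓ)) := by
      have h1 : Submodule.map X.subtype (Submodule.span (ZMod ℓ) (Set.range bX)) = X := by
        rw [bX.span_eq, Submodule.map_top, Submodule.range_subtype]
      have h2 : Submodule.map X.subtype (Submodule.span (ZMod ℓ) (Set.range bX))
          = Submodule.span (ZMod ℓ) (Set.range vX) := by
        rw [Submodule.map_span]
        congr 1
        rw [← Set.range_comp]
        rfl
      rw [← h1, h2]
    have hstepX : ∀ u, u ∈ Submodule.span (ZMod ℓ) (Set.range vX) →
        fmap u ∈ Submodule.span K (Set.range (fun i => fmap (vX i))) := by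
      intro u hu'
      induction hu' using Submodule.span_induction with
      | mem z hz =>
        obtain ⟨i, rfl⟩ := hz
        exact Submodule.subset_span ⟨i, rfl⟩
      | zero => rw [hfzero]; exact Submodule.zero_mem _
      | add y' z' _ _ hy' hz' => rw [hfadd]; exact Submodule.add_mem _ hy' hz'
      | smul c y' _ hy' => rw [hfsmul]; exact Submodule.smul_mem _ _ hy'
    have himgsub : fmap '' (X : Set (Fin 7 → ZMod ℓ)) ⊆
        (Submodule.span K (Set.range (fun i => fmap (vX i))) : Set (Fin 7 → K)) := by
      rintro y ⟨u, hu, rfl⟩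
      exact hstepX u (hXspan hu)
    have hle : Submodule.span K (fmap '' (X : Set (Fin 7 → ZMod ℓ)))
        ≤ Submodule.span K (Set.range (fun i => fmap (vX i))) :=
      Submodule.span_le.mpr himgsub
    have hcard : finrank K (Submodule.span K (Set.range (fun i => fmap (vX i)))) ≤ n := by
      have := finrank_span_le_card (R := K) (Set.range (fun i => fmap (vX i)))
      refine this.trans ?_
      rw [Set.toFinset_range]
      exact (Finset.card_image_le).trans (by simp)
    exact (Submodule.finrank_mono hle).trans hcard
  -- nontriviality of the base-changed submodule
  have hne : ∀ (X : Submodule (ZMod ℓ) (Fin 7 → ZMod ℓ)), X ≠ ⊥ →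
      Submodule.span K (fmap '' (X : Set (Fin 7 → ZMod ℓ))) ≠ ⊥ := by
    intro X hX hcontr
    obtain ⟨x, hxX, hx0⟩ := Submodule.exists_mem_ne_zero_of_ne_bot hX
    have : fmap x ∈ Submodule.span K (fmap '' (X : Set (Fin 7 → ZMod ℓ))) :=
      Submodule.subset_span ⟨x, hxX, rfl⟩
    rw [hcontr, Submodule.mem_bot] at this
    exact hx0 (hf0 x this)
  -- the sum of the two base-changed submodules is everything
  have hsupK : Submodule.span K (fmap '' (U : Set (Fin 7 → ZMod ℓ)))
      ⊔ Submodule.span K (fmap '' (W : Set (Fin 7 → ZMod ℓ))) = ⊤ := by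
    rw [eq_top_iff, ← (Pi.basisFun K (Fin 7)).span_eq, Submodule.span_le]
    rintro y ⟨i, rfl⟩
    have hsingle : (Pi.basisFun K (Fin 7)) i = fmap (Pi.single i 1) := by
      funext j
      rw [Pi.basisFun_apply]
      simp only [hfmap_def, Function.comp_apply, Pi.single_apply]
      rw [apply_ite φ, _root_.map_one φ, _root_.map_zero φ]
    have hmem : (Pi.single i (1 : ZMod ℓ)) ∈ U ⊔ W := by rw [hUWtop]; trivial
    obtain ⟨u, hu, w, hw, huw⟩ := Submodule.mem_sup.mp hmem
    rw [hsingle, ← huw, hfadd]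
    exact Submodule.add_mem_sup (Submodule.subset_span ⟨u, hu, rfl⟩)
      (Submodule.subset_span ⟨w, hw, rfl⟩)
  -- relation over K
  have hGLrel : gInf * h = h * gInf ^ p := by
    calc gInf * h = h * (h⁻¹ * gInf * h) := by group
      _ = h * gInf ^ p := by rw [hconj]
  have hMrel : (gInf : Matrix (Fin 7) (Fin 7) (ZMod ℓ)) * (h : Matrix (Fin 7) (Fin 7) (ZMod ℓ))
      = (h : Matrix (Fin 7) (Fin 7) (ZMod ℓ)) * (gInf : Matrix (Fin 7) (Fin 7) (ZMod ℓ)) ^ p := by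
    have := congrArg (Units.val) hGLrel
    rw [Units.val_mul, Units.val_mul, Units.val_pow_eq_pow_val] at this
    exact this
  have hrelK : ((gInf : Matrix (Fin 7) (Fin 7) (ZMod ℓ)).map φ)
        * ((h : Matrix (Fin 7) (Fin 7) (ZMod ℓ)).map φ)
      = ((h : Matrix (Fin 7) (Fin 7) (ZMod ℓ)).map φ)
        * ((gInf : Matrix (Fin 7) (Fin 7) (ZMod ℓ)).map φ) ^ p := by
    have := congrArg (φ.mapMatrix) hMrel
    simp only [_root_.map_mul, _root_.map_pow] at this
    simpa [RingHom.mapMatrix_apply] using this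
  have hHmK_unit : IsUnit ((h : Matrix (Fin 7) (Fin 7) (ZMod ℓ)).map φ) := by
    have hunit : IsUnit (h : Matrix (Fin 7) (Fin 7) (ZMod ℓ)) := h.isUnit
    have := hunit.map φ.mapMatrix
    simpa [RingHom.mapMatrix_apply] using this
  -- apply the classification to both sides
  have hUK := eigen_classify ζ hζ p hp hp7
    ((gInf : Matrix (Fin 7) (Fin 7) (ZMod ℓ)).map φ)
    ((h : Matrix (Fin 7) (Fin 7) (ZMod ℓ)).map φ) P hdiagP hHmK_unit hrelK
    (Submodule.span K (fmap '' (U : Set (Fin 7 → ZMod ℓ))))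
    (hinv U _ (hUH gInf hgInfH)) (hinv U _ (hUH h hhH))
  have hWK := eigen_classify ζ hζ p hp hp7
    ((gInf : Matrix (Fin 7) (Fin 7) (ZMod ℓ)).map φ)
    ((h : Matrix (Fin 7) (Fin 7) (ZMod ℓ)).map φ) P hdiagP hHmK_unit hrelK
    (Submodule.span K (fmap '' (W : Set (Fin 7 → ZMod ℓ))))
    (hinv W _ (hWH gInf hgInfH)) (hinv W _ (hWH h hhH))
  -- numerics
  have h7F : finrank (ZMod ℓ) (Fin 7 → ZMod ℓ) = 7 := Module.finrank_fin_fun _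
  have h7K : finrank K (Fin 7 → K) = 7 := Module.finrank_fin_fun _
  have haddUW : finrank (ZMod ℓ) U + finrank (ZMod ℓ) W = 7 := by
    have := Submodule.finrank_sup_add_finrank_inf_eq U W
    rw [hUW, hUWtop, finrank_bot, finrank_top, h7F] at this
    omega
  have hUne : finrank (ZMod ℓ) U ≠ 0 := fun hc => hU0 (Submodule.finrank_eq_zero.mp hc)
  have hWne : finrank (ZMod ℓ) W ≠ 0 := fun hc => hW0 (Submodule.finrank_eq_zero.mp hc)
  have hUKne : finrank K (Submodule.span K (fmap '' (U : Set (Fin 7 → ZMod ℓ)))) ≠ 0 :=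
    fun hc => hne U hU0 (Submodule.finrank_eq_zero.mp hc)
  have hWKne : finrank K (Submodule.span K (fmap '' (W : Set (Fin 7 → ZMod ℓ)))) ≠ 0 :=
    fun hc => hne W hW0 (Submodule.finrank_eq_zero.mp hc)
  have hUKle := hdim_le U
  have hWKle := hdim_le W
  have hsum7 : 7 ≤ finrank K (Submodule.span K (fmap '' (U : Set (Fin 7 → ZMod ℓ))))
      + finrank K (Submodule.span K (fmap '' (W : Set (Fin 7 → ZMod ℓ)))) := by
    have := Submodule.finrank_sup_add_finrank_inf_eq
      (Submodule.span K (fmap '' (U : Set (Fin 7 → ZMod ℓ))))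
      (Submodule.span K (fmap '' (W : Set (Fin 7 → ZMod ℓ))))
    rw [hsupK, finrank_top, h7K] at this
    omega
  have hdim1 : finrank (ZMod ℓ) U = 1 ∨ finrank (ZMod ℓ) W = 1 := by omega
  -- the nilpotent part
  set N : Matrix (Fin 7) (Fin 7) (ZMod ℓ) := (g₁ : Matrix (Fin 7) (Fin 7) (ZMod ℓ)) - 1
    with hN_def
  have hUN : ∀ v ∈ U, N.mulVec v ∈ U := by
    intro v hv
    rw [hN_def, Matrix.sub_mulVec, Matrix.one_mulVec]
    exact Submodule.sub_mem _ (hUH g₁ hg₁H v hv) hv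
  have hWN : ∀ v ∈ W, N.mulVec v ∈ W := by
    intro v hv
    rw [hN_def, Matrix.sub_mulVec, Matrix.one_mulVec]
    exact Submodule.sub_mem _ (hWH g₁ hg₁H v hv) hv
  have hr1 : finrank (ZMod ℓ) (LinearMap.range N.mulVecLin) = 4 := hrk1
  have hr2 : finrank (ZMod ℓ) (LinearMap.range (N.mulVecLin ∘ₗ N.mulVecLin)) = 1 := by
    have hpow : (N ^ 2).mulVecLin = N.mulVecLin ∘ₗ N.mulVecLin := by
      rw [pow_two, Matrix.mulVecLin_mul]
    rw [← hpow]
    exact hrk2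
  have hker : LinearMap.ker N.mulVecLin ≤ LinearMap.range N.mulVecLin :=
    ker_le_range_aux N.mulVecLin h7F hr1 hr2
  rcases hdim1 with hdU | hdW
  · exact dim1_contra N hu hker U W hU0 hUW hUWtop hUN hWN hdU
  · exact dim1_contra N hu hker W U hW0 (by rw [inf_comm]; exact hUW)
      (by rw [sup_comm]; exact hUWtop) hWN hUN hdW
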